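/- The Fréchet–Urysohn fan S_ω is M-separable. -/

import Mathlib

open Set Topology Filter

/-- A topological space is *M-separable* if for every sequence of dense sets `⟨Dₙ⟩` one can
choose finite `Fₙ ⊆ Dₙ` whose union is dense. -/
def MSeparable (X : Type*) [TopologicalSpace X] : Prop :=
  ∀ D : ℕ → Set X, (∀ n, Dense (D n)) →
    ∃ F : ℕ → Set X, (∀ n, F n ⊆ D n ∧ (F n).Finite) ∧ Dense (⋃ n, F n)

/-- The subspace `T = ω × ({0} ∪ {1/(n+1) : n ∈ ω})` of `ℝ²`. -/
def fanT : Set (ℝ × ℝ) :=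
  {p | (∃ n : ℕ, p.1 = n) ∧ (p.2 = 0 ∨ ∃ m : ℕ, p.2 = 1 / (m + 1))}

/-- The equivalence relation on `T` identifying all points of `ω × {0}`. -/
def fanSetoid : Setoid ↥fanT where
  r p q := p = q ∨ ((p : ℝ × ℝ).2 = 0 ∧ (q : ℝ × ℝ).2 = 0)
  iseqv := by
    constructor
    · intro p
      exact Or.inl rfl
    · intro p q h
      rcases h with h | h
      · exact Or.inl h.symm
      · exact Or.inr ⟨h.2, h.1⟩
    · intro p q r hpq hqr
      rcases hpq with h | h
      · subst h
        exact hqr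
      · rcases hqr with h' | h'
        · exact Or.inr ⟨h.1, h' ▸ h.2⟩
        · exact Or.inr ⟨h.1, h'.2⟩

/-- The Fréchet–Urysohn fan `S_ω`, the quotient of `T` collapsing `ω × {0}` to a point,
with the quotient topology. -/
def FrechetUrysohnFan : Type := Quotient fanSetoid

instance : TopologicalSpace FrechetUrysohnFan :=
  instTopologicalSpaceQuotient

noncomputable def fanPt (n m : ℕ) : ↥fanT :=
  ⟨((n : ℝ), 1 / (m + 1)), ⟨n, rfl⟩, Or.inr ⟨m, rfl⟩⟩

lemma one_div_pos' (m : ℕ) : (0:ℝ) < 1 / (m + 1) := by positivity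

/-- The singleton of a spine point is open in the subtype. -/
lemma fanPt_isolated_sub (n m : ℕ) : IsOpen ({fanPt n m} : Set ↥fanT) := by
  rw [Metric.isOpen_singleton_iff]
  refine ⟨1 / ((m+1)*(m+2)), by positivity, ?_⟩
  rintro ⟨⟨x, y⟩, ⟨k, hk⟩, hy⟩ hd
  rw [Subtype.dist_eq] at hd
  simp only [fanPt] at hd ⊢
  rw [Prod.dist_eq, max_lt_iff, Real.dist_eq, Real.dist_eq] at hd
  obtain ⟨hd1, hd2⟩ := hd
  have hm2 : (1:ℝ) / ((m+1)*(m+2)) ≤ 1 := by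
    rw [div_le_one (by positivity)]; nlinarith [sq_nonneg (m:ℝ)]
  have hxn : x = (n : ℝ) := by
    subst hk
    have : |(k:ℝ) - n| < 1 := lt_of_lt_of_le hd1 hm2
    have hab := abs_lt.mp this
    have h1 : (k:ℝ) < n + 1 := by linarith [hab.2]
    have h2 : (n:ℝ) < k + 1 := by linarith [hab.1]
    have h1' : k < n + 1 := by exact_mod_cast h1
    have h2' : n < k + 1 := by exact_mod_cast h2
    have : k = n := by omega
    exact_mod_cast this
  have hyv : y = 1 / (m + 1) := by
    rcases hy with h0 | ⟨j, hj⟩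
    · exfalso
      rw [h0] at hd2
      have : |(0:ℝ) - 1/(m+1)| = 1/(m+1) := by
        rw [zero_sub, abs_neg, abs_of_pos (one_div_pos' m)]
      rw [this] at hd2
      have : (1:ℝ)/((m+1)*(m+2)) ≤ 1/(m+1) := by
        apply one_div_le_one_div_of_le (by positivity); nlinarith [sq_nonneg (m:ℝ)]
      linarith
    · subst hj
      congr 1
      have hjm : j = m := by
        by_contra hne
        rcases Nat.lt_or_ge j m with hlt | hge
        · -- j < m : 1/(j+1) - 1/(m+1) ≥ 1/m - 1/(m+1) = 1/(m(m+1)) ≥ ε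
          have hm1 : (1:ℕ) ≤ m := by omega
          have hja : (j:ℝ) + 1 ≤ m := by exact_mod_cast hlt
          have key : (1:ℝ)/((m+1)*(m+2)) ≤ 1/(j+1) - 1/(m+1) := by
            rw [div_sub_div _ _ (by positivity) (by positivity)]
            rw [div_le_div_iff₀ (by positivity) (by positivity)]
            ring_nf
            have hm1' : (1:ℝ) ≤ m := by exact_mod_cast hm1
            nlinarith [sq_nonneg ((m:ℝ) - j)]
          have : |1/(j+1) - 1/((m:ℝ)+1)| ≥ 1/(j+1) - 1/(m+1) := le_abs_self _
          linarith
        · have hgt : m < j := lt_of_le_of_ne hge (Ne.symm hne)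
          have hja : (m:ℝ) + 1 ≤ j := by exact_mod_cast hgt
          have key : (1:ℝ)/((m+1)*(m+2)) ≤ 1/(m+1) - 1/(j+1) := by
            rw [div_sub_div _ _ (by positivity) (by positivity)]
            rw [div_le_div_iff₀ (by positivity) (by positivity)]
            nlinarith [mul_nonneg (by linarith : (0:ℝ) ≤ (j:ℝ) - m - 1) (by positivity : (0:ℝ) ≤ (m:ℝ) + 1)]
          have : |1/(j+1) - 1/((m:ℝ)+1)| ≥ 1/(m+1) - 1/(j+1) := by
            rw [abs_sub_comm]; exact le_abs_self _
          linarith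
      subst hjm; rfl
  exact Subtype.ext (by simp only [Prod.mk.injEq]; exact ⟨hxn, hyv⟩)

/-- The spine points are isolated in the quotient. -/
lemma fanPt_isolated (n m : ℕ) :
    IsOpen ({Quotient.mk fanSetoid (fanPt n m)} : Set FrechetUrysohnFan) := by
  show IsOpen (Quotient.mk fanSetoid ⁻¹' ({Quotient.mk fanSetoid (fanPt n m)} : Set (Quotient fanSetoid)))
  have : Quotient.mk fanSetoid ⁻¹' {Quotient.mk fanSetoid (fanPt n m)}
      = {fanPt n m} := by
    ext q
    simp only [mem_preimage, mem_singleton_iff, Quotient.eq]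
    constructor
    · rintro (h | ⟨h1, h2⟩)
      · exact h
      · exfalso
        have : (1:ℝ) / (m + 1) = 0 := h2
        exact (one_div_pos' m).ne' this
    · rintro rfl; exact Or.inl rfl
  rw [this]
  exact fanPt_isolated_sub n m

lemma dense_contains_isolated {X : Type*} [TopologicalSpace X] {D : Set X}
    (hD : Dense D) {x : X} (hx : IsOpen ({x} : Set X)) : x ∈ D := by
  obtain ⟨y, hy1, hy2⟩ := hD.inter_open_nonempty {x} hx ⟨x, rfl⟩
  rwa [mem_singleton_iff.mp hy1] at hy2

/-- The set of spine points is dense in the fan. -/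
lemma dense_fanPts :
    Dense (range fun nm : ℕ × ℕ => Quotient.mk fanSetoid (fanPt nm.1 nm.2)) := by
  rw [dense_iff_inter_open]
  intro U hU ⟨u, hu⟩
  obtain ⟨q, rfl⟩ := Quotient.exists_rep u
  have hV : IsOpen (Quotient.mk fanSetoid ⁻¹' U) := (isOpen_coinduced).mp hU
  have hqV : q ∈ Quotient.mk fanSetoid ⁻¹' U := hu
  obtain ⟨⟨⟨x, y⟩, ⟨k, hk⟩, hy⟩, hq⟩ : ∃ q, q ∈ Quotient.mk fanSetoid ⁻¹' U := ⟨q, hqV⟩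
  rcases hy with h0 | ⟨j, hj⟩
  · -- point on the base: find a spine point nearby
    rw [Metric.isOpen_iff] at hV
    obtain ⟨ε, hε, hball⟩ := hV _ hq
    obtain ⟨M, hM⟩ := exists_nat_one_div_lt hε
    refine ⟨Quotient.mk fanSetoid (fanPt k M), ?_, ⟨(k, M), rfl⟩⟩
    refine hball ?_
    rw [Metric.mem_ball, Subtype.dist_eq, Prod.dist_eq]
    simp only [fanPt]
    rw [Real.dist_eq, Real.dist_eq, show x = (k:ℝ) from hk, show y = (0:ℝ) from h0]
    rw [max_lt_iff]
    constructor
    · simpa using hε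
    · rw [sub_zero, abs_of_pos (one_div_pos' M)]; exact hM
  · -- already a spine point
    have : (⟨(x, y), ⟨k, hk⟩, Or.inr ⟨j, hj⟩⟩ : ↥fanT) = fanPt k j := by
      apply Subtype.ext
      simp only [fanPt, Prod.mk.injEq]
      exact ⟨hk, hj⟩
    refine ⟨Quotient.mk fanSetoid (fanPt k j), ?_, ⟨(k, j), rfl⟩⟩
    rw [← this]
    exact hq

/-- the Fréchet–Urysohn fan `S_ω` is M-separable. -/
theorem fan_mseparable : MSeparable FrechetUrysohnFan := by
  intro D hD
  let e : ℕ ≃ ℕ × ℕ := (Denumerable.eqv (ℕ × ℕ)).symm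
  refine ⟨fun n => {Quotient.mk fanSetoid (fanPt (e n).1 (e n).2)}, fun n => ⟨?_, finite_singleton _⟩, ?_⟩
  · refine singleton_subset_iff.mpr ?_
    exact dense_contains_isolated (hD n) (fanPt_isolated _ _)
  · refine Dense.mono ?_ dense_fanPts
    rintro _ ⟨⟨a, b⟩, rfl⟩
    refine mem_iUnion.mpr ⟨e.symm (a, b), ?_⟩
    simp
    exact rfl
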